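/- arXiv:2509.12852 — 4 statements merged into one kernel-verified Lean document; each statement's English description precedes it below -/
import Mathlib

section
/- Let pb < gb be real numbers, C₁, C₂ > 0, and let x be any real number. Define L(x) = C₁(pb - x) + C₂(gb - x) if x ≤ pb; L(x) = C₁(x - pb) + C₂(x - gb) if x ≥ gb; and L(x) = C₂(gb - x) - C₁(pb - x) if pb < x < gb. Then L(x) ≥ min{C₁, C₂}·(gb - pb) for all x. -/
/-- Corollary 1(b): the length `L(x)` of the support of the next-iteration PSO velocity
distribution is at least `min{C₁,C₂}·(gb - pb)` for every position `x`. -/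
theorem velocity_support_length_lower_bound
    (pb gb C₁ C₂ : ℝ) (hpg : pb < gb) (hC₁ : 0 < C₁) (hC₂ : 0 < C₂)
    (L : ℝ → ℝ)
    (hL : ∀ x, L x = if x ≤ pb then C₁ * (pb - x) + C₂ * (gb - x)
      else if gb ≤ x then C₁ * (x - pb) + C₂ * (x - gb)
      else C₂ * (gb - x) - C₁ * (pb - x)) :
    ∀ x : ℝ, L x ≥ min C₁ C₂ * (gb - pb) := by
  intro x
  rw [hL x]
  rcases min_cases C₁ C₂ with ⟨h, h'⟩ | ⟨h, h'⟩ <;>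
    rw [h] <;> split_ifs with h1 h2 <;> nlinarith
end

section
/- Let d₀ > 0, ub > lb with ub - lb ≥ d₀/8 · ⌈8(ub-lb)/d₀⌉⁻¹·⌈8(ub-lb)/d₀⌉ (automatically satisfied), and set δ_a ≤ d₀²/(128(ub-lb)). Define a_t = x₀ + t·v₀ - t(t-1)·δ_a where v₀ ≥ d₀/4 and t ranges over 0, …, ⌈8(ub-lb)/d₀⌉ - 1. Then for each t in this range, a_t - δ_a - a_{t-1} = v₀ - (2t-1)δ_a > d₀/8; in particular the intervals R_t = [a_t - δ_a, a_t] satisfy inf R_t > sup R_{t-1}. -/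
/-- Proposition A6.1: the intervals `R_t = [a_t - δ_a, a_t]` of the rightward inertial
motion chain are strictly increasing, with gap `a_t - δ_a - a_{t-1} = v₀ - (2t-1)δ_a > d₀/8`. -/
theorem rightward_chain_intervals_increasing
    (x₀ v₀ d₀ δa lb ub : ℝ) (hd₀ : 0 < d₀) (hlu : lb < ub)
    (hv₀ : v₀ ≥ d₀ / 4) (hδa_pos : 0 < δa)
    (hδa : δa ≤ d₀ ^ 2 / (128 * (ub - lb)))
    (a : ℕ → ℝ) (ha : ∀ t : ℕ, a t = x₀ + t * v₀ - t * (t - 1) * δa) :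
    ∀ t : ℕ, 1 ≤ t → t ≤ ⌈8 * (ub - lb) / d₀⌉₊ - 1 →
      a t - δa - a (t - 1) = v₀ - (2 * t - 1) * δa ∧
        v₀ - (2 * t - 1) * δa > d₀ / 8 ∧
        a t - δa > a (t - 1) := by
  intro t ht1 ht2
  have hub : (0:ℝ) < ub - lb := by linarith
  have hlt : t < ⌈8 * (ub - lb) / d₀⌉₊ := by omega
  have htR : (t : ℝ) < 8 * (ub - lb) / d₀ := Nat.lt_ceil.mp hlt
  have htd : (t : ℝ) * d₀ < 8 * (ub - lb) := by
    rw [div_eq_mul_inv] at htR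
    calc (t:ℝ) * d₀ < (8 * (ub - lb) * d₀⁻¹) * d₀ := by
          exact mul_lt_mul_of_pos_right htR hd₀
      _ = 8 * (ub - lb) := by field_simp
  have hδa' : δa * (128 * (ub - lb)) ≤ d₀ ^ 2 := by
    rw [le_div_iff₀ (by positivity)] at hδa
    linarith
  have ht1R : (1:ℝ) ≤ (t:ℝ) := by exact_mod_cast ht1
  have hkey : (2 * (t:ℝ) - 1) * δa < d₀ / 8 := by
    nlinarith [mul_lt_mul_of_pos_right htd hδa_pos, sq_nonneg d₀, mul_pos hd₀ hδa_pos]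
  have heq : a t - δa - a (t - 1) = v₀ - (2 * t - 1) * δa := by
    obtain ⟨s, rfl⟩ : ∃ s, t = s + 1 := ⟨t - 1, by omega⟩
    rw [ha, ha]
    simp only [Nat.add_sub_cancel]
    push_cast
    ring
  exact ⟨heq, by linarith, by linarith [heq]⟩
end

section
/- Let x(t+1) = 2x(t) - x(t-1) + C₁r₁(pb - x(t)) + C₂r₂(gb - x(t)) where r₁, r₂ range over [0,1], C₁, C₂ > 0 and pb < gb. Fix λ ∈ (0,1). If x(t) > λ·pb + (1-λ)·gb, then the set of attainable values of x(t+1) (as r₁, r₂ range over [0,1]²) contains the interval [2x(t) - x(t-1) - C₁(1-λ)(gb-pb), 2x(t) - x(t-1)]. If x(t) ≤ λ·pb + (1-λ)·gb, then the set of attainable values contains [2x(t) - x(t-1), 2x(t) - x(t-1) + C₂λ(gb-pb)]. -/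
/-- Lemma A1: the set of attainable next positions
`x(t+1) = 2x(t) - x(t-1) + C₁r₁(pb - x(t)) + C₂r₂(gb - x(t))`, as `(r₁, r₂)`
ranges over `[0,1]²`, contains the stated interval in each of the two cases. -/
theorem attainable_position_interval
    (pb gb C₁ C₂ lam xprev xcur : ℝ)
    (hpg : pb < gb) (hC₁ : 0 < C₁) (hC₂ : 0 < C₂)
    (hlam : lam ∈ Set.Ioo (0 : ℝ) 1)
    (S : Set ℝ)
    (hS : S = (fun r : ℝ × ℝ =>
      2 * xcur - xprev + C₁ * r.1 * (pb - xcur) + C₂ * r.2 * (gb - xcur)) ''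
        (Set.Icc 0 1 ×ˢ Set.Icc 0 1)) :
    (xcur > lam * pb + (1 - lam) * gb →
      Set.Icc (2 * xcur - xprev - C₁ * (1 - lam) * (gb - pb)) (2 * xcur - xprev) ⊆ S) ∧
    (xcur ≤ lam * pb + (1 - lam) * gb →
      Set.Icc (2 * xcur - xprev) (2 * xcur - xprev + C₂ * lam * (gb - pb)) ⊆ S) := by
  obtain ⟨hl0, hl1⟩ := hlam
  subst hS
  constructor
  · intro hx y hy
    have hpx : (1 - lam) * (gb - pb) ≤ xcur - pb := by nlinarith
    have hpos : 0 < xcur - pb := by nlinarith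
    refine ⟨((2 * xcur - xprev - y) / (C₁ * (xcur - pb)), 0),
      ⟨⟨?_, ?_⟩, le_refl 0, zero_le_one⟩, ?_⟩
    · have : 0 ≤ 2 * xcur - xprev - y := by linarith [hy.2]
      positivity
    · rw [div_le_one (by positivity)]
      nlinarith [hy.1]
    · have hne : C₁ * (xcur - pb) ≠ 0 := by positivity
      simp only
      field_simp
      ring
  · intro hx y hy
    have hgx : lam * (gb - pb) ≤ gb - xcur := by nlinarith
    have hpos : 0 < gb - xcur := by nlinarith
    refine ⟨(0, (y - (2 * xcur - xprev)) / (C₂ * (gb - xcur))),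
      ⟨⟨le_refl 0, zero_le_one⟩, ?_, ?_⟩, ?_⟩
    · have : 0 ≤ y - (2 * xcur - xprev) := by linarith [hy.1]
      positivity
    · rw [div_le_one (by positivity)]
      nlinarith [hy.2]
    · have hne : C₂ * (gb - xcur) ≠ 0 := by positivity
      simp only
      field_simp
      ring
end

section
/- Consider the PSO velocity recursion with ω = 1 on the interval [lb, ub]: for t ≥ 2, if x(t-1) ≥ max{pb, gb} then v(t) ≤ v(t-1); if x(t-1) = lb then v(t) ≤ (C₁+C₂)(ub-lb); and if lb < x(t-1) < max{pb,gb} with v(t-1) = x(t-1) - x(t-2) then v(t) ≤ (C₁+C₂+1)(ub-lb). Consequently, if v(0) ≤ ub - lb and x(τ) ∈ [lb, ub] for all τ, then v(t) ≤ (C₁+C₂+1)(ub-lb) for all t ≥ 0. -/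
private lemma pso_inc_bound (C r a b lb ub : ℝ) (hC : 0 < C) (hr : 0 ≤ r) (hr1 : r ≤ 1)
    (ha : lb ≤ a) (ha' : a ≤ ub) (hb : lb ≤ b) (hb' : b ≤ ub) :
    C * r * (a - b) ≤ C * (ub - lb) := by
  nlinarith [mul_nonneg (sub_nonneg.mpr hr1) (by linarith : (0:ℝ) ≤ ub - lb),
    mul_nonneg hr (by linarith : (0:ℝ) ≤ ub - lb - (a - b))]

/-- Lemma 3: case-by-case bounds on the PSO velocity recursion with `ω = 1`, and the
resulting uniform bound `v(t) ≤ (C₁+C₂+1)(ub-lb)` for all `t`. -/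
theorem velocity_uniform_upper_bound
    (lb ub pb gb C₁ C₂ : ℝ) (hlu : lb < ub)
    (hC₁ : 0 < C₁) (hC₂ : 0 < C₂)
    (hpb : pb ∈ Set.Icc lb ub) (hgb : gb ∈ Set.Icc lb ub)
    (x v r₁ r₂ : ℕ → ℝ)
    (hr₁ : ∀ t, r₁ t ∈ Set.Icc (0 : ℝ) 1) (hr₂ : ∀ t, r₂ t ∈ Set.Icc (0 : ℝ) 1)
    (hx : ∀ t, x t ∈ Set.Icc lb ub)
    (hv : ∀ t : ℕ, 1 ≤ t →
      v t = v (t - 1) + C₁ * r₁ t * (pb - x (t - 1)) + C₂ * r₂ t * (gb - x (t - 1)))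
    (hclamp : ∀ t : ℕ, 1 ≤ t → x t = lb → v t ≤ 0)
    (hinterior : ∀ t : ℕ, 2 ≤ t → lb < x (t - 1) → x (t - 1) < ub →
      x (t - 1) = x (t - 2) + v (t - 1)) :
    (∀ t : ℕ, 2 ≤ t → x (t - 1) ≥ max pb gb → v t ≤ v (t - 1)) ∧
    (∀ t : ℕ, 2 ≤ t → x (t - 1) = lb → v t ≤ (C₁ + C₂) * (ub - lb)) ∧
    (∀ t : ℕ, 2 ≤ t → lb < x (t - 1) → x (t - 1) < max pb gb →
      v (t - 1) = x (t - 1) - x (t - 2) → v t ≤ (C₁ + C₂ + 1) * (ub - lb)) ∧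
    (v 0 ≤ ub - lb → ∀ t : ℕ, v t ≤ (C₁ + C₂ + 1) * (ub - lb)) := by
  have hinc : ∀ t : ℕ, 1 ≤ t →
      v t ≤ v (t - 1) + (C₁ + C₂) * (ub - lb) := by
    intro t ht
    have h1 := pso_inc_bound C₁ (r₁ t) pb (x (t-1)) lb ub hC₁ (hr₁ t).1 (hr₁ t).2
      hpb.1 hpb.2 (hx (t-1)).1 (hx (t-1)).2
    have h2 := pso_inc_bound C₂ (r₂ t) gb (x (t-1)) lb ub hC₂ (hr₂ t).1 (hr₂ t).2
      hgb.1 hgb.2 (hx (t-1)).1 (hx (t-1)).2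
    rw [hv t ht]; ring_nf; ring_nf at h1 h2 ⊢; linarith
  refine ⟨?_, ?_, ?_, ?_⟩
  · intro t ht hmax
    have h1 : pb ≤ x (t-1) := le_trans (le_max_left _ _) hmax
    have h2 : gb ≤ x (t-1) := le_trans (le_max_right _ _) hmax
    have hp1 := mul_nonneg (mul_nonneg hC₁.le (hr₁ t).1) (sub_nonneg.mpr h1)
    have hp2 := mul_nonneg (mul_nonneg hC₂.le (hr₂ t).1) (sub_nonneg.mpr h2)
    rw [hv t (by omega)]
    nlinarith
  · intro t ht hlb
    have hcl := hclamp (t-1) (by omega) hlb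
    have := hinc t (by omega)
    linarith
  · intro t ht h1 h2 hveq
    have hub : x (t-1) ≤ ub := (hx (t-1)).2
    have hvb : v (t-1) ≤ ub - lb := by
      rw [hveq]; have := (hx (t-2)).1; linarith
    have := hinc t (by omega)
    nlinarith
  · intro hv0
    have hB : ub - lb ≤ (C₁ + C₂ + 1) * (ub - lb) := by nlinarith
    intro t
    induction t with
    | zero => linarith
    | succ n ih =>
      have hrec := hinc (n+1) (by omega)
      simp only [Nat.add_sub_cancel] at hrec
      rcases Nat.eq_zero_or_pos n with rfl | hn
      · linarith
      · -- n ≥ 1, so n+1 ≥ 2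
        rcases le_or_gt (max pb gb) (x n) with hmax | hmax
        · -- increments nonpositive
          have h1 : pb ≤ x n := le_trans (le_max_left _ _) hmax
          have h2 : gb ≤ x n := le_trans (le_max_right _ _) hmax
          have hp1 := mul_nonneg (mul_nonneg hC₁.le (hr₁ (n+1)).1) (sub_nonneg.mpr h1)
          have hp2 := mul_nonneg (mul_nonneg hC₂.le (hr₂ (n+1)).1) (sub_nonneg.mpr h2)
          have heq := hv (n+1) (by omega)
          simp only [Nat.add_sub_cancel] at heq
          rw [heq]; nlinarith
        · rcases eq_or_lt_of_le (hx n).1 with hlb | hlb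
          · have hcl := hclamp n hn hlb.symm
            nlinarith
          · have hub : x n < ub := lt_of_lt_of_le hmax (max_le hpb.2 hgb.2)
            have hint := hinterior (n+1) (by omega) (by simpa using hlb) (by simpa using hub)
            simp only [Nat.add_sub_cancel] at hint
            have hvn : v n ≤ ub - lb := by
              have := (hx (n+1-2)).1; linarith
            linarith
end
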